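/- If E is not a parent of Y, then S_ICP = PA_Y ∩ (CH_E ∪ PA(AN_Y ∩ CH_E)). -/

import Mathlib

/-- Nodes of the graph: the environment node `E`, predictor nodes `V j` for
`j ∈ {1, …, d}` (represented by `Fin d`), and the response node `Y`. -/
inductive Node (d : ℕ) : Type where
  | E : Node d
  | V : Fin d → Node d
  | Y : Node d
deriving DecidableEq

/-- A directed acyclic graph on `{E} ∪ {1, …, d} ∪ {Y}` in which `E` has no
parents (`E` is exogenous). -/
structure CGraph (d : ℕ) where
  adj : Node d → Node d → Prop
  acyclic : ∀ v, ¬ Relation.TransGen adj v v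
  exogenous : ∀ v, ¬ adj v Node.E

namespace CGraph

variable {d : ℕ} (G : CGraph d)

/-- Undirected adjacency: an edge between `u` and `v` in either direction. -/
def Edge (u v : Node d) : Prop := G.adj u v ∨ G.adj v u

/-- `p` is a path between `a` and `b`: a duplicate-free list of nodes starting
at `a`, ending at `b`, with consecutive nodes adjacent (in either direction). -/
def IsPath (p : List (Node d)) (a b : Node d) : Prop :=
  p.head? = some a ∧ p.getLast? = some b ∧ p.Nodup ∧ p.Chain' G.Edge

/-- `x` is a (strict) descendant of `v`. -/
def Desc (v x : Node d) : Prop := Relation.TransGen G.adj v x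

/-- The consecutive triple `u, m, w` on a path blocks the path given `C`:
either `m` is a non-collider lying in `C`, or `m` is a collider such that
neither `m` nor any of its descendants lies in `C`. -/
def BlockedAt (C : Set (Node d)) (u m w : Node d) : Prop :=
  (¬ (G.adj u m ∧ G.adj w m) ∧ m ∈ C) ∨
  ((G.adj u m ∧ G.adj w m) ∧ m ∉ C ∧ ∀ x, G.Desc m x → x ∉ C)

/-- A path `p` is blocked by `C` if some consecutive triple on it blocks it. -/
def Blocked (C : Set (Node d)) (p : List (Node d)) : Prop :=
  ∃ q u m w r, p = q ++ u :: m :: w :: r ∧ G.BlockedAt C u m w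

/-- `a` and `b` are d-separated given `C`: every path between them is blocked. -/
def DSep (a b : Node d) (C : Set (Node d)) : Prop :=
  ∀ p, G.IsPath p a b → G.Blocked C p

/-- `S ⊆ {1, …, d}` is invariant if `E` and `Y` are d-separated given `S`. -/
def Invariant (S : Set (Fin d)) : Prop := G.DSep Node.E Node.Y (Node.V '' S)

/-- `S` is minimally invariant if it is invariant and no strict subset of `S`
is invariant. -/
def MinInvariant (S : Set (Fin d)) : Prop :=
  G.Invariant S ∧ ∀ S', S' ⊂ S → ¬ G.Invariant S'

/-- `S_AS`: the union of all minimally invariant sets. -/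
def SAS : Set (Fin d) := ⋃₀ {S | G.MinInvariant S}

/-- `S_ICP`: the intersection of all invariant sets (`∅` if there are none). -/
def SICP : Set (Fin d) :=
  {j | (∃ S, G.Invariant S) ∧ ∀ S, G.Invariant S → j ∈ S}

/-- `S_AS^m`: the union of all minimally invariant sets of cardinality `≤ m`. -/
def SASm (m : ℕ) : Set (Fin d) := ⋃₀ {S | G.MinInvariant S ∧ S.ncard ≤ m}

/-- The parents of `Y` among `{1, …, d}`. -/
def paY : Set (Fin d) := {j | G.adj (Node.V j) Node.Y}

/-- The children of `E` among `{1, …, d}`. -/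
def chE : Set (Fin d) := {j | G.adj Node.E (Node.V j)}

/-- The ancestors of `Y` among `{1, …, d}`. -/
def anY : Set (Fin d) := {j | Relation.TransGen G.adj (Node.V j) Node.Y}

/-- `PA(A)`: the union of the parent sets of the elements of `A ⊆ {1, …, d}`. -/
def paOf (A : Set (Fin d)) : Set (Fin d) := {j | ∃ i ∈ A, G.adj (Node.V j) (Node.V i)}

-- helper lemmas
lemma adj_asymm {u v : Node d} (h1 : G.adj u v) (h2 : G.adj v u) : False :=
  G.acyclic u (Relation.TransGen.head h1 (Relation.TransGen.single h2))

lemma not_to_E {v : Node d} (h : Relation.TransGen G.adj v Node.E) : False := by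
  cases h with
  | single h => exact G.exogenous _ h
  | tail _ h => exact G.exogenous _ h

theorem invariant_of (S : Set (Fin d))
    (hSa : ∀ k ∈ S, k ∈ G.anY)
    (huniq : ∀ k k', k ∈ G.anY → k ∉ S → k' ∈ G.anY → k' ∉ S → k = k')
    (hiff : ∀ k, k ∈ G.anY → k ∉ S → k ∈ G.paY →
        k ∉ G.chE ∧ ∀ i, i ∈ G.anY → i ∈ G.chE → ¬ G.adj (Node.V k) (Node.V i))
    (hEY : ¬ G.adj Node.E Node.Y) : G.Invariant S := by
  intro p hp
  by_contra hnb
  obtain ⟨hhd, hlast, hnd, hch⟩ := hp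
  set C := Node.V '' S with hC
  have act : ∀ q u m w r, p = q ++ u :: m :: w :: r → ¬ G.BlockedAt C u m w :=
    fun q u m w r he hb => hnb ⟨q, u, m, w, r, he, hb⟩
  have hCan : ∀ c ∈ C, Relation.TransGen G.adj c Node.Y := by
    rintro c ⟨k, hk, rfl⟩; exact hSa k hk
  have hedge : ∀ q a b r, p = q ++ a :: b :: r → G.Edge a b := by
    intro q a b r he
    have h2 : List.Chain' G.Edge [a, b] := hch.infix ⟨q, r, by rw [he]; simp⟩
    exact List.isChain_pair.mp h2
  have notinC : ∀ q u m w r, p = q ++ u :: m :: w :: r →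
      ¬ (G.adj u m ∧ G.adj w m) → m ∉ C := by
    intro q u m w r he hnc hm
    exact act q u m w r he (Or.inl ⟨hnc, hm⟩)
  have col_an : ∀ q u m w r, p = q ++ u :: m :: w :: r → G.adj u m → G.adj w m →
      Relation.TransGen G.adj m Node.Y := by
    intro q u m w r he h1 h2
    by_cases hm : m ∈ C
    · exact hCan m hm
    · by_cases hd : ∀ x, G.Desc m x → x ∉ C
      · exact absurd (Or.inr ⟨⟨h1, h2⟩, hm, hd⟩) (act q u m w r he)
      · push_neg at hd
        obtain ⟨x, hx, hxC⟩ := hd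
        exact hx.trans (hCan x hxC)
  have lemL : ∀ q a b r, p = q ++ a :: b :: r → G.adj b a →
      Relation.TransGen G.adj a Node.Y := by
    intro q
    induction q using List.reverseRecOn with
    | nil =>
      intro a b r he hba
      rw [he] at hhd
      simp only [List.nil_append, List.head?_cons, Option.some_inj] at hhd
      subst hhd
      exact absurd hba (G.exogenous b)
    | append_singleton q₀ c ih =>
      intro a b r he hba
      have he' : p = q₀ ++ c :: a :: b :: r := by rw [he]; simp
      by_cases hca : G.adj c a
      · exact col_an q₀ c a b r he' hca hba
      · have hac : G.adj a c := (hedge q₀ c a (b :: r) he').resolve_left hca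
        exact Relation.TransGen.head hac (ih c a (b :: r) he' hac)
  have lemR : ∀ r a w q, p = q ++ a :: w :: r →
      a = Node.E ∨ Relation.TransGen G.adj a Node.Y := by
    intro r
    induction r with
    | nil =>
      intro a w q he
      rcases hedge q a w [] he with haw | hwa
      · have hw : w = Node.Y := by
          rw [he, show q ++ a :: w :: ([] : List (Node d)) = (q ++ [a]) ++ [w] by simp,
            List.getLast?_concat] at hlast
          exact Option.some_inj.mp hlast
        exact Or.inr (Relation.TransGen.single (hw ▸ haw))
      · exact Or.inr (lemL q a w [] he hwa)
    | cons w' r' ih =>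
      intro a w q he
      rcases hedge q a w (w' :: r') he with haw | hwa
      · rcases ih w w' (q ++ [a]) (by rw [he]; simp) with hE | han
        · exact absurd (hE ▸ haw) (G.exogenous a)
        · exact Or.inr (Relation.TransGen.head haw han)
      · exact Or.inr (lemL q a w (w' :: r') he hwa)
  -- generic nodup helpers
  have conc : ∀ (l : List (Node d)), l = [] ∨ ∃ l' c, l = l' ++ [c] := by
    intro l
    rcases List.eq_nil_or_concat l with h | ⟨l', c, h⟩
    · exact Or.inl h
    · exact Or.inr ⟨l', c, by simpa using h⟩
  have hneq : ∀ (A : List (Node d)) (b : Node d) (B : List (Node d)),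
      p = A ++ b :: B → A ≠ [] → b ≠ Node.E := by
    intro A b B hAB hA hbE
    subst hbE
    obtain ⟨a₀, A', rfl⟩ : ∃ a₀ A', A = a₀ :: A' := by
      cases A with
      | nil => exact absurd rfl hA
      | cons a₀ A' => exact ⟨a₀, A', rfl⟩
    rw [hAB] at hhd hnd
    simp only [List.cons_append, List.head?_cons, Option.some_inj] at hhd
    subst hhd
    simp [List.nodup_cons] at hnd
  have hdup : ∀ (A : List (Node d)) (c : Node d) (B : List (Node d)),
      p = A ++ c :: B → c ∉ B := by
    intro A c B hAB hmem
    rw [hAB] at hnd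
    exact (List.nodup_cons.mp hnd.of_append_right).1 hmem
  -- structure of p
  obtain ⟨t, hpt⟩ : ∃ t, p = Node.E :: t := by
    cases p with
    | nil => simp at hhd
    | cons a t =>
      simp only [List.head?_cons, Option.some_inj] at hhd
      exact ⟨t, by rw [hhd]⟩
  have ht : t ≠ [] := by
    rintro rfl
    rw [hpt] at hlast
    simp at hlast
  rcases conc t with rfl | ⟨t₀, z, rfl⟩
  · exact ht rfl
  have hz : z = Node.Y := by
    rw [hpt, show Node.E :: (t₀ ++ [z]) = (Node.E :: t₀) ++ [z] by simp,
      List.getLast?_concat] at hlast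
    exact Option.some_inj.mp hlast
  subst hz
  rcases conc t₀ with rfl | ⟨t₁, a, rfl⟩
  · rcases hedge [] Node.E Node.Y [] (by simpa using hpt) with h1 | h2
    · exact hEY h1
    · exact G.exogenous _ h2
  have hpq : p = (Node.E :: t₁) ++ a :: Node.Y :: [] := by rw [hpt]; simp
  have haY : G.adj a Node.Y := by
    rcases hedge _ a Node.Y [] hpq with h | h
    · exact h
    · exact absurd (Relation.TransGen.head h (lemL _ a Node.Y [] hpq h)) (G.acyclic _)
  obtain ⟨k₀, rfl⟩ : ∃ k₀, a = Node.V k₀ := by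
    cases a with
    | E => exact absurd haY hEY
    | Y => exact absurd (Relation.TransGen.single haY) (G.acyclic _)
    | V k => exact ⟨k, rfl⟩
  have hk₀an : k₀ ∈ G.anY := Relation.TransGen.single haY
  have hk₀pa : k₀ ∈ G.paY := haY
  obtain ⟨q₁, u, hq₁⟩ : ∃ q' u', (Node.E :: t₁) = q' ++ [u'] := by
    rcases conc (Node.E :: t₁) with h | ⟨q', u', h⟩
    · exact absurd h (by simp)
    · exact ⟨q', u', h⟩
  have hpqA : p = q₁ ++ u :: Node.V k₀ :: Node.Y :: [] := by rw [hpq, hq₁]; simp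
  have hncA : ¬ (G.adj u (Node.V k₀) ∧ G.adj Node.Y (Node.V k₀)) :=
    fun h => G.adj_asymm haY h.2
  have hk₀C : Node.V k₀ ∉ C := notinC _ _ _ _ _ hpqA hncA
  have hk₀S : k₀ ∉ S := fun h => hk₀C ⟨k₀, h, rfl⟩
  obtain ⟨hk₀chE, hk₀pa2⟩ := hiff k₀ hk₀an hk₀S hk₀pa
  rcases conc q₁ with rfl | ⟨q₂, x, rfl⟩
  · -- u = E
    obtain ⟨rfl, rfl⟩ : Node.E = u ∧ t₁ = [] := by
      simpa using hq₁
    rcases hedge [] Node.E (Node.V k₀) [Node.Y] (by simpa using hpqA) with h | h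
    · exact hk₀chE h
    · exact G.exogenous _ h
  · have hpqB : p = q₂ ++ x :: u :: Node.V k₀ :: Node.Y :: [] := by rw [hpqA]; simp
    have huE : u ≠ Node.E := hneq (q₂ ++ [x]) u _ hpqA (by simp)
    have huan : Relation.TransGen G.adj u Node.Y :=
      (lemR [Node.Y] u (Node.V k₀) (q₂ ++ [x]) hpqA).resolve_left huE
    obtain ⟨k₁, rfl⟩ : ∃ k₁, u = Node.V k₁ := by
      cases u with
      | E => exact absurd rfl huE
      | Y => exact absurd huan (G.acyclic _)
      | V k => exact ⟨k, rfl⟩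
    have hk₁an : k₁ ∈ G.anY := huan
    have hk₁S_imp : Node.V k₁ ∉ C → False := by
      intro hC1
      have hkk : k₁ = k₀ := huniq k₁ k₀ hk₁an (fun h => hC1 ⟨k₁, h, rfl⟩) hk₀an hk₀S
      exact hdup (q₂ ++ [x]) (Node.V k₁) _ hpqA (by rw [hkk]; simp)
    rcases hedge (q₂ ++ [x]) (Node.V k₁) (Node.V k₀) [Node.Y] hpqA with huk | hku
    · exact hk₁S_imp (notinC q₂ x (Node.V k₁) (Node.V k₀) _ hpqB
        (fun h => G.adj_asymm huk h.2))
    · by_cases hcol : G.adj x (Node.V k₁)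
      · rcases conc q₂ with rfl | ⟨q₄, x', rfl⟩
        · have hxE : x = Node.E := by
            rw [hpqB] at hhd
            simpa [eq_comm] using hhd
          subst hxE
          exact hk₀pa2 k₁ hk₁an hcol hku
        · have hpqC : p = q₄ ++ x' :: x :: Node.V k₁ :: Node.V k₀ :: Node.Y :: [] := by
            rw [hpqB]; simp
          have hxE : x ≠ Node.E := hneq (q₄ ++ [x']) x
            (Node.V k₁ :: Node.V k₀ :: Node.Y :: []) (by rw [hpqC]; simp) (by simp)
          have hxan : Relation.TransGen G.adj x Node.Y :=
            (lemR (Node.V k₀ :: Node.Y :: []) x (Node.V k₁) (q₄ ++ [x']) hpqB).resolve_left hxE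
          obtain ⟨k₂, rfl⟩ : ∃ k₂, x = Node.V k₂ := by
            cases x with
            | E => exact absurd rfl hxE
            | Y => exact absurd hxan (G.acyclic _)
            | V k => exact ⟨k, rfl⟩
          have hxC : Node.V k₂ ∉ C := notinC q₄ x' (Node.V k₂) (Node.V k₁) _ hpqC
            (fun h => G.adj_asymm hcol h.2)
          have hkk : k₂ = k₀ := huniq k₂ k₀ hxan (fun h => hxC ⟨k₂, h, rfl⟩) hk₀an hk₀S
          exact hdup (q₄ ++ [x']) (Node.V k₂) _ hpqB (by rw [hkk]; simp)
      · exact hk₁S_imp (notinC q₂ x (Node.V k₁) (Node.V k₀) _ hpqB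
          (fun h => hcol h.1))

theorem anY_invariant (hEY : ¬ G.adj Node.E Node.Y) : G.Invariant G.anY :=
  G.invariant_of G.anY (fun _ hk => hk)
    (fun _ _ hk hkS _ _ => absurd hk hkS)
    (fun _ hk hkS => absurd hk hkS) hEY

theorem chE_mem {S : Set (Fin d)} {j : Fin d} (hS : G.Invariant S)
    (hj : j ∈ G.paY) (hc : j ∈ G.chE) : j ∈ S := by
  have hpath : G.IsPath [Node.E, Node.V j, Node.Y] Node.E Node.Y := by
    refine ⟨rfl, rfl, by simp, ?_⟩
    exact List.isChain_cons_cons.mpr ⟨Or.inl hc, List.isChain_pair.mpr (Or.inl hj)⟩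
  obtain ⟨q, u, m, w, r, heq, hb⟩ := hS _ hpath
  obtain ⟨rfl, rfl⟩ : q = [] ∧ r = [] := by
    have hlen := congrArg List.length heq
    simp at hlen
    constructor <;> [exact List.length_eq_zero_iff.mp (by omega);
      exact List.length_eq_zero_iff.mp (by omega)]
  obtain ⟨rfl, rfl, rfl⟩ : Node.E = u ∧ Node.V j = m ∧ Node.Y = w := by
    simpa using heq
  rcases hb with ⟨_, hm⟩ | ⟨⟨_, h2⟩, _⟩
  · obtain ⟨k, hk, hkEq⟩ := hm
    obtain rfl : k = j := by simpa using hkEq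
    exact hk
  · exact absurd (Relation.TransGen.head hj (Relation.TransGen.single h2)) (G.acyclic _)

theorem paOf_mem {S : Set (Fin d)} {j i : Fin d} (hS : G.Invariant S)
    (hj : j ∈ G.paY) (hi : i ∈ G.anY) (hic : i ∈ G.chE)
    (hadj : G.adj (Node.V j) (Node.V i)) : j ∈ S := by
  set C := Node.V '' S with hC
  have step1 : Node.V i ∈ C ∨ ∃ x, G.Desc (Node.V i) x ∧ x ∈ C := by
    obtain ⟨l, hchain, hlastl⟩ :=
      List.exists_isChain_cons_of_relationReflTransGen (Relation.TransGen.to_reflTransGen hi)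
    have hpair : List.Pairwise (Relation.TransGen G.adj) (Node.V i :: l) :=
      List.isChain_iff_pairwise.mp (hchain.imp fun _ _ h => Relation.TransGen.single h)
    have hnd2 : (Node.V i :: l).Nodup := by
      refine List.Pairwise.imp ?_ hpair
      intro a b h hab
      exact G.acyclic a (hab ▸ h)
    have hEl : Node.E ∉ Node.V i :: l := by
      intro hmem
      rcases List.mem_cons.mp hmem with h | h
      · exact nomatch h
      · exact G.not_to_E ((List.pairwise_cons.mp hpair).1 _ h)
    have hpath : G.IsPath (Node.E :: Node.V i :: l) Node.E Node.Y := by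
      refine ⟨rfl, ?_, List.nodup_cons.mpr ⟨hEl, hnd2⟩, ?_⟩
      · rw [List.getLast?_eq_getLast (l := Node.E :: Node.V i :: l) (by simp), List.getLast_cons (by simp), hlastl]
      · exact List.Chain.cons (Or.inl hic) (hchain.imp fun _ _ h => Or.inl h)
    obtain ⟨q, u, m, w, r, heq, hb⟩ := hS _ hpath
    have hdirected : List.Chain' G.adj (Node.E :: Node.V i :: l) :=
      List.Chain.cons hic hchain
    have htr : List.Chain' G.adj [u, m, w] :=
      hdirected.infix ⟨q, r, by rw [heq]; simp⟩
    have hum : G.adj u m := (List.isChain_cons_cons.mp htr).1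
    have hmw : G.adj m w := List.isChain_pair.mp (List.isChain_cons_cons.mp htr).2
    rcases hb with ⟨_, hm⟩ | ⟨⟨_, h2⟩, _⟩
    · have hmE : m ≠ Node.E := by
        rintro rfl
        obtain ⟨k, _, hk⟩ := hm
        exact nomatch hk
      have hmem : m ∈ Node.V i :: l := by
        have hmp : m ∈ Node.E :: Node.V i :: l := by rw [heq]; simp
        exact (List.mem_cons.mp hmp).resolve_left hmE
      rcases List.mem_cons.mp hmem with rfl | hml
      · exact Or.inl hm
      · exact Or.inr ⟨m, (List.pairwise_cons.mp hpair).1 _ hml, hm⟩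
    · exact absurd (Relation.TransGen.head hmw (Relation.TransGen.single h2)) (G.acyclic _)
  have hij : Node.V i ≠ Node.V j := fun h => G.acyclic _ (Relation.TransGen.single (h ▸ hadj))
  have hpath2 : G.IsPath [Node.E, Node.V i, Node.V j, Node.Y] Node.E Node.Y := by
    refine ⟨rfl, rfl, by simp [hij], ?_⟩
    exact List.isChain_cons_cons.mpr ⟨Or.inl hic,
      List.isChain_cons_cons.mpr ⟨Or.inr hadj, List.isChain_pair.mpr (Or.inl hj)⟩⟩
  obtain ⟨q, u, m, w, r, heq, hb⟩ := hS _ hpath2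
  rcases q with _ | ⟨c, _ | ⟨c', q''⟩⟩
  · rcases r with _ | ⟨r₀, _ | ⟨r₁, r''⟩⟩
    · exact absurd (congrArg List.length heq) (by simp)
    · obtain ⟨rfl, rfl, rfl, rfl⟩ :
          Node.E = u ∧ Node.V i = m ∧ Node.V j = w ∧ Node.Y = r₀ := by
        simpa using heq
      rcases hb with ⟨hnc, _⟩ | ⟨_, hnC, hdesc⟩
      · exact absurd ⟨hic, hadj⟩ hnc
      · rcases step1 with h | ⟨x, hx, hxC⟩
        · exact absurd h hnC
        · exact absurd hxC (hdesc x hx)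
    · have hl := congrArg List.length heq
      simp at hl
  · rcases r with _ | ⟨r₀, r''⟩
    · obtain ⟨rfl, rfl, rfl, rfl⟩ :
          Node.E = c ∧ Node.V i = u ∧ Node.V j = m ∧ Node.Y = w := by
        simpa using heq
      rcases hb with ⟨_, hm⟩ | ⟨⟨_, h2⟩, _⟩
      · obtain ⟨k, hk, hkEq⟩ := hm
        obtain rfl : k = j := by simpa using hkEq
        exact hk
      · exact absurd (Relation.TransGen.head hj (Relation.TransGen.single h2)) (G.acyclic _)
    · have hl := congrArg List.length heq
      simp at hl
      try omega
  · have hl := congrArg List.length heq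
    simp at hl
    try omega


end CGraph

/-- if `E` is not a parent of `Y`, then
`S_ICP = PA_Y ∩ (CH_E ∪ PA(AN_Y ∩ CH_E))`. -/
theorem SICP_characterization {d : ℕ} (G : CGraph d)
    (h : ¬ G.adj Node.E Node.Y) :
    G.SICP = G.paY ∩ (G.chE ∪ G.paOf (G.anY ∩ G.chE)) := by
  ext j
  simp only [CGraph.SICP, CGraph.paOf, Set.mem_setOf_eq, Set.mem_inter_iff, Set.mem_union]
  constructor
  · rintro ⟨-, hall⟩
    by_contra hj
    have hinv : G.Invariant (G.anY \ {j}) := by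
      apply G.invariant_of
      · exact fun k hk => hk.1
      · intro k k' hk hkS hk' hk'S
        have h1 : k = j := by
          by_contra hne
          exact hkS ⟨hk, hne⟩
        have h2 : k' = j := by
          by_contra hne
          exact hk'S ⟨hk', hne⟩
        rw [h1, h2]
      · intro k hk hkS hkpa
        have h1 : k = j := by
          by_contra hne
          exact hkS ⟨hk, hne⟩
        subst h1
        constructor
        · intro hc
          exact hj ⟨hkpa, Or.inl hc⟩
        · intro i hian hichE hadj
          exact hj ⟨hkpa, Or.inr ⟨i, ⟨hian, hichE⟩, hadj⟩⟩
      · exact h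
    exact (hall _ hinv).2 rfl
  · rintro ⟨hpa, hrest⟩
    refine ⟨⟨G.anY, G.anY_invariant h⟩, fun S hS => ?_⟩
    rcases hrest with hc | ⟨i, ⟨hian, hichE⟩, hadj⟩
    · exact G.chE_mem hS hpa hc
    · exact G.paOf_mem hS hpa hian hichE hadj
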